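/- In a free group, if u^n = v^n for some integer n ≥ 1, then u = v (roots are unique). -/

import Mathlib

open FreeGroup

private lemma aux_pair {β : Type*} (x hd : β × Bool) :
    (x.1 = hd.1 ∧ x.2 = !hd.2) ↔ hd = (x.1, !x.2) := by
  cases x with
  | mk a s =>
    cases hd with
    | mk b t =>
      simp only [Prod.mk.injEq]
      cases s <;> cases t <;> simp [eq_comm]

/-- If `x :: l = l ++ [x]` then `l` is constant with value `x`. -/
private lemma aux_cons_eq_append {β : Type*} : ∀ (l : List β) (x : β),
    x :: l = l ++ [x] → l = List.replicate l.length x := by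
  intro l
  induction l with
  | nil => intro x _; rfl
  | cons a t ih =>
    intro x h
    simp only [List.cons_append, List.cons.injEq] at h
    obtain ⟨rfl, h2⟩ := h
    have := ih x h2
    simp [List.replicate_succ, ← this]

private lemma aux_toWord_cons {β : Type*} [DecidableEq β] (x : β × Bool) (z : FreeGroup β)
    (h : ∀ p ∈ z.toWord.head?, p ≠ (x.1, !x.2)) :
    (FreeGroup.mk [x] * z).toWord = x :: z.toWord := by
  conv_lhs => rw [← mk_toWord (x := z), mul_mk]
  show reduce ([x] ++ z.toWord) = x :: z.toWord
  rw [List.singleton_append, reduce.cons, reduce_toWord]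
  rcases hw : z.toWord with _ | ⟨hd, tl⟩
  · rfl
  · have hne : hd ≠ (x.1, !x.2) := h hd (by rw [hw]; rfl)
    have hcond : ¬(x.1 = hd.1 ∧ x.2 = !hd.2) := fun hc => hne ((aux_pair x hd).mp hc)
    simp [hcond]

private lemma aux_toWord_concat {β : Type*} [DecidableEq β] (x : β × Bool) (z : FreeGroup β)
    (h : ∀ p ∈ z.toWord.getLast?, p ≠ (x.1, !x.2)) :
    (z * FreeGroup.mk [x]).toWord = z.toWord ++ [x] := by
  have hinv : (z * FreeGroup.mk [x])⁻¹ = FreeGroup.mk [(x.1, !x.2)] * z⁻¹ := by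
    rw [mul_inv_rev, inv_mk]
    rfl
  have hhead : ∀ p ∈ (z⁻¹).toWord.head?, p ≠ ((x.1, !x.2).1, !(x.1, !x.2).2) := by
    intro p hp
    rw [toWord_inv] at hp
    simp only [invRev, List.head?_reverse, List.getLast?_map, Option.mem_def,
      Option.map_eq_some_iff] at hp
    obtain ⟨q, hq, rfl⟩ := hp
    have hq' : q ≠ (x.1, !x.2) := h q hq
    simp only [Bool.not_not, ne_eq]
    intro hc
    apply hq'
    have h1 : q.1 = x.1 := by simpa using congrArg Prod.fst hc
    have h2 : (!q.2) = x.2 := by simpa using congrArg Prod.snd hc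
    cases q with
    | mk a s =>
      simp only [Prod.mk.injEq]
      constructor
      · exact h1
      · cases s <;> simp_all
  have key := aux_toWord_cons (β := β) ((x.1, !x.2)) z⁻¹ hhead
  rw [← hinv] at key
  have h2 := congrArg invRev key
  rw [← toWord_inv, inv_inv] at h2
  rw [h2]
  have : invRev ((x.1, !x.2) :: z⁻¹.toWord) = invRev (z⁻¹.toWord) ++ [x] := by
    simp only [invRev, List.map_cons, List.reverse_cons, Bool.not_not]
  rw [this, ← toWord_inv, inv_inv]

/-- A free group with two distinct generators has trivial center. -/
private lemma aux_center_eq_one {β : Type*} {a b : β} (hab : a ≠ b) {z : FreeGroup β}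
    (hz : ∀ x : FreeGroup β, z * x = x * z) : z = 1 := by
  classical
  by_contra h1
  have hw : z.toWord ≠ [] := fun h => h1 (toWord_eq_nil_iff.mp h)
  obtain ⟨⟨c, s⟩, t, hct⟩ := List.exists_cons_of_ne_nil hw
  set e : β := if a = c then b else a with he
  have hec : e ≠ c := by
    rw [he]; split
    · rename_i h'; rw [← h']; exact (Ne.symm hab)
    · assumption
  set l := z.toWord.getLast hw with hl
  set b₀ : Bool := if l = (e, false) then false else true with hb₀
  have hheadcond : ∀ p ∈ z.toWord.head?, p ≠ ((e, b₀).1, !(e, b₀).2) := by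
    intro p hp
    rw [hct] at hp
    simp only [List.head?_cons, Option.mem_def, Option.some.injEq] at hp
    subst hp
    intro hcontra
    exact hec (by simpa using congrArg Prod.fst hcontra.symm)
  have hlastcond : ∀ p ∈ z.toWord.getLast?, p ≠ ((e, b₀).1, !(e, b₀).2) := by
    intro p hp
    have hpl : p = l := by
      rw [List.getLast?_eq_getLast_of_ne_nil hw] at hp
      simpa [hl] using hp.symm
    subst hpl
    rw [hb₀]
    split
    · rename_i h'; rw [h']; simp
    · rename_i h'; simpa using h'
  have h1' := aux_toWord_cons (e, b₀) z hheadcond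
  have h2' := aux_toWord_concat (e, b₀) z hlastcond
  have hcm := hz (FreeGroup.mk [(e, b₀)])
  have hww : (e, b₀) :: z.toWord = z.toWord ++ [(e, b₀)] := by
    rw [← h1', ← h2', hcm]
  have hrep := aux_cons_eq_append z.toWord (e, b₀) hww
  rw [hct] at hrep
  have hhead : (c, s) = (e, b₀) := by
    rw [List.length_cons, List.replicate_succ] at hrep
    exact (List.cons.injEq _ _ _ _ ▸ hrep).1
  have hce : c = e := by simpa using congrArg Prod.fst hhead
  exact hec hce.symm

/-- Distinct generators of a free group do not commute. -/
private lemma aux_of_not_commute {β : Type*} {a b : β} (hab : a ≠ b) :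
    ¬ Commute (FreeGroup.of a) (FreeGroup.of b) := by
  classical
  intro h
  have h1 : (FreeGroup.of a * FreeGroup.of b).toWord = [(a, true), (b, true)] := by
    have := aux_toWord_cons (a, true) (FreeGroup.of b)
      (by intro p hp; rw [toWord_of] at hp; simp at hp; subst hp; simp)
    simpa [FreeGroup.of, toWord_of] using this
  have h2 : (FreeGroup.of b * FreeGroup.of a).toWord = [(b, true), (a, true)] := by
    have := aux_toWord_cons (b, true) (FreeGroup.of a)
      (by intro p hp; rw [toWord_of] at hp; simp at hp; subst hp; simp)
    simpa [FreeGroup.of, toWord_of] using this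
  rw [Commute, SemiconjBy] at h
  rw [h, h2] at h1
  simp at h1
  exact hab h1.1.symm

/-- Powers of a generator detect the exponent. -/
private lemma aux_of_pow_eq_one {β : Type*} (c : β) (m : ℕ) (h : FreeGroup.of c ^ m = 1) :
    m = 0 := by
  classical
  have := congrArg FreeGroup.norm h
  rw [norm_of_pow, FreeGroup.norm_one] at this
  exact this

/-- Torsion in a free group over a subsingleton type is trivial. -/
private lemma aux_subsingleton_torsion {γ : Type*} [Subsingleton γ] (y : FreeGroup γ)
    (n : ℕ) (hn : 1 ≤ n) (hyn : y ^ n = 1) : y = 1 := by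
  rcases isEmpty_or_nonempty γ with hE | hN
  · haveI : Unique (FreeGroup γ) := by unfold FreeGroup; infer_instance
    exact Subsingleton.elim y 1
  · obtain ⟨c⟩ := hN
    have key : ∀ v : FreeGroup γ, ∃ k : ℤ, v = FreeGroup.of c ^ k := by
      intro v
      induction v with
      | C1 => exact ⟨0, by simp⟩
      | of x => exact ⟨1, by rw [Subsingleton.elim x c]; simp⟩
      | inv_of x ih => obtain ⟨k, hk⟩ := ih; exact ⟨-k, by rw [hk, ← zpow_neg]⟩
      | mul x y ihx ihy =>
        obtain ⟨k, hk⟩ := ihx; obtain ⟨m, hm⟩ := ihy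
        exact ⟨k + m, by rw [hk, hm, zpow_add]⟩
    obtain ⟨k, hk⟩ := key y
    rw [hk, ← zpow_natCast, ← zpow_mul] at hyn
    have hkn : k * n = 0 := by
      rcases le_or_gt 0 (k * n) with hge | hlt
      · obtain ⟨m, hm⟩ := Int.eq_ofNat_of_zero_le hge
        rw [hm, zpow_natCast] at hyn
        have := aux_of_pow_eq_one c m hyn
        omega
      · have hneg : (FreeGroup.of c) ^ (-(k * n)) = 1 := by
          rw [zpow_neg, hyn, inv_one]
        obtain ⟨m, hm⟩ := Int.eq_ofNat_of_zero_le (by omega : (0:ℤ) ≤ -(k * n))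
        rw [hm, zpow_natCast] at hneg
        have := aux_of_pow_eq_one c m hneg
        omega
    have hk0 : k = 0 := by
      rcases mul_eq_zero.mp hkn with h' | h'
      · exact h'
      · exfalso; omega
    rw [hk, hk0, zpow_zero]

/-- In a free group over a subsingleton type, everything commutes. -/
private lemma aux_commute_subsingleton {β : Type*} [Subsingleton β] (x y : FreeGroup β) :
    Commute x y := by
  rcases isEmpty_or_nonempty β with hE | hN
  · haveI : Unique (FreeGroup β) := by unfold FreeGroup; infer_instance
    simp [Subsingleton.elim x 1, Subsingleton.elim y 1]
  · obtain ⟨c⟩ := hN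
    have key : ∀ w : FreeGroup β, ∃ k : ℤ, w = FreeGroup.of c ^ k := by
      intro w
      induction w with
      | C1 => exact ⟨0, by simp⟩
      | of x => exact ⟨1, by rw [Subsingleton.elim x c]; simp⟩
      | inv_of x ih => obtain ⟨k, hk⟩ := ih; exact ⟨-k, by rw [hk, ← zpow_neg]⟩
      | mul x y ihx ihy =>
        obtain ⟨k, hk⟩ := ihx; obtain ⟨m, hm⟩ := ihy
        exact ⟨k + m, by rw [hk, hm, zpow_add]⟩
    obtain ⟨k, hk⟩ := key x
    obtain ⟨m, hm⟩ := key y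
    rw [hk, hm]
    exact Commute.zpow_zpow (Commute.refl _) k m

/-- Free groups are torsion-free. -/
private lemma aux_torsionfree {α : Type*} (w : FreeGroup α) (n : ℕ) (hn : 1 ≤ n)
    (h : w ^ n = 1) : w = 1 := by
  classical
  set H := Subgroup.zpowers w with hH
  haveI : IsFreeGroup H := inferInstance
  set γ := IsFreeGroup.Generators H with hγ
  haveI hsub : Subsingleton γ := by
    by_contra hns
    rw [not_subsingleton_iff_nontrivial] at hns
    obtain ⟨a, b, hab⟩ := exists_pair_ne γ
    apply aux_of_not_commute hab
    have hcomm : ∀ x y : H, Commute x y := by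
      rintro ⟨x, hx⟩ ⟨y, hy⟩
      obtain ⟨i, rfl⟩ := hx
      obtain ⟨j, rfl⟩ := hy
      rw [Commute, SemiconjBy]
      apply Subtype.ext
      push_cast
      exact (Commute.zpow_zpow (Commute.refl w) i j)
    have e := IsFreeGroup.mulEquiv H
    have hc := hcomm (e (FreeGroup.of a)) (e (FreeGroup.of b))
    rw [Commute, SemiconjBy, ← _root_.map_mul, ← _root_.map_mul] at hc
    exact e.injective hc
  set e := IsFreeGroup.mulEquiv H with hee
  set x : H := ⟨w, Subgroup.mem_zpowers w⟩ with hx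
  have hxn : x ^ n = 1 := by
    apply Subtype.ext
    push_cast
    exact h
  set y := e.symm x with hy
  have hyn : y ^ n = 1 := by
    rw [hy, ← _root_.map_pow, hxn, _root_.map_one]
  have hy1 : y = 1 := aux_subsingleton_torsion y n hn hyn
  have hx1 : x = 1 := by
    have h' := congrArg e hy1
    rw [hy, MulEquiv.apply_symm_apply, _root_.map_one] at h'
    exact h'
  have := congrArg (Subtype.val) hx1
  exact this

/-- In a free group, roots are unique: `u ^ n = v ^ n` with `n ≥ 1` implies `u = v`. -/
theorem freeGroup_pow_injective {α : Type*} (u v : FreeGroup α) (n : ℕ) (hn : 1 ≤ n)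
    (h : u ^ n = v ^ n) : u = v := by
  classical
  set K := Subgroup.closure ({u, v} : Set (FreeGroup α)) with hK
  have hu : u ∈ K := Subgroup.subset_closure (by simp)
  have hv : v ∈ K := Subgroup.subset_closure (by simp)
  have hcen : ∀ x ∈ K, Commute (u ^ n) x := by
    intro x hx
    induction hx using Subgroup.closure_induction with
    | mem y hy =>
      rcases hy with rfl | rfl
      · exact (Commute.refl y).pow_left n
      · rw [h]; exact (Commute.refl y).pow_left n
    | one => exact Commute.one_right _
    | mul a b _ _ iha ihb => exact iha.mul_right ihb
    | inv a _ iha => exact iha.inv_right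
  haveI : IsFreeGroup K := inferInstance
  set γ := IsFreeGroup.Generators K with hγ
  set e := IsFreeGroup.mulEquiv K with hee
  by_cases hsub : Subsingleton γ
  · -- K is abelian, so u and v commute
    have huv : Commute u v := by
      have hc := aux_commute_subsingleton (e.symm ⟨u, hu⟩) (e.symm ⟨v, hv⟩)
      rw [Commute, SemiconjBy, ← _root_.map_mul, ← _root_.map_mul] at hc
      have hc2 := e.symm.injective hc
      have hc3 := congrArg Subtype.val hc2
      push_cast at hc3
      exact hc3
    have hkey : (u * v⁻¹) ^ n = 1 := by
      rw [(huv.inv_right).mul_pow, inv_pow, h, mul_inv_cancel]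
    have := aux_torsionfree (u * v⁻¹) n hn hkey
    rwa [mul_inv_eq_one] at this
  · -- γ has two distinct elements; the center of FreeGroup γ is trivial
    rw [not_subsingleton_iff_nontrivial] at hsub
    obtain ⟨a, b, hab⟩ := exists_pair_ne γ
    set g : K := ⟨u ^ n, pow_mem hu n⟩ with hg
    set z := e.symm g with hz
    have hzc : ∀ x : FreeGroup γ, z * x = x * z := by
      intro x
      have hcomm : Commute (u ^ n) ((e x : K) : FreeGroup α) := hcen _ (e x).2
      have hgx : g * e x = e x * g := by
        apply Subtype.ext
        push_cast
        exact hcomm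
      have h' := congrArg e.symm hgx
      rw [_root_.map_mul, _root_.map_mul, MulEquiv.symm_apply_apply, ← hz] at h'
      exact h'
    have hz1 : z = 1 := aux_center_eq_one hab hzc
    have hg1 : g = 1 := by
      have h' := congrArg e hz1
      rw [hz, MulEquiv.apply_symm_apply, _root_.map_one] at h'
      exact h'
    have hun : u ^ n = 1 := by
      have := congrArg Subtype.val hg1
      simpa [hg] using this
    have hvn : v ^ n = 1 := by rw [← h]; exact hun
    rw [aux_torsionfree u n hn hun, aux_torsionfree v n hn hvn]
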